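/- Let B, C ∈ B(H). Then w([[0, B], [C, 0]])² ≥ (1/(4√2))·[ ‖B + C*‖⁴ + ‖B − C*‖⁴ ]^(1/2) ≥ (1/4)·max{ ‖|B|² + |C*|²‖, ‖|B*|² + |C|²‖ }. -/

import Mathlib

open ContinuousLinearMap

variable {H : Type*} [NormedAddCommGroup H] [InnerProductSpace ℂ H] [CompleteSpace H]

/-- The numerical radius of a bounded linear operator:
`w(T) = sup { |⟨Tx, x⟩| : ‖x‖ = 1 }`. -/
noncomputable def numRadius {E : Type*} [NormedAddCommGroup E] [InnerProductSpace ℂ E]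
    (T : E →L[ℂ] E) : ℝ :=
  sSup {r : ℝ | ∃ x : E, ‖x‖ = 1 ∧ r = ‖(inner ℂ (T x) x : ℂ)‖}

/-- The absolute value `|T| = (T*T)^(1/2)` of a bounded linear operator.
Note `opAbs (adjoint T) = (T T*)^(1/2) = |T*|`. -/
noncomputable def opAbs (T : H →L[ℂ] H) : H →L[ℂ] H := CFC.sqrt (adjoint T * T)

/-- The off-diagonal operator matrix `[[0, B], [C, 0]]` acting on `H ⊕ H`
(with the Hilbert space structure `WithLp 2 (H × H)`) by `(x₁, x₂) ↦ (B x₂, C x₁)`. -/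
noncomputable def offDiag (B C : H →L[ℂ] H) :
    WithLp 2 (H × H) →L[ℂ] WithLp 2 (H × H) :=
  ((WithLp.prodContinuousLinearEquiv 2 ℂ H H).symm : (H × H) →L[ℂ] WithLp 2 (H × H)).comp
    (((B.comp (ContinuousLinearMap.snd ℂ H H)).prod
        (C.comp (ContinuousLinearMap.fst ℂ H H))).comp
      ((WithLp.prodContinuousLinearEquiv 2 ℂ H H) : WithLp 2 (H × H) →L[ℂ] H × H))


set_option maxHeartbeats 1000000 in
set_option synthInstance.maxHeartbeats 1000000 in
lemma aux_sq_opAbs (T : H →L[ℂ] H) : opAbs T ^ 2 = adjoint T * T := by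
  rw [opAbs]
  exact CFC.sq_sqrt _ (by rw [← star_eq_adjoint]; exact star_mul_self_nonneg T)

lemma aux_numRadius_nonneg {E : Type*} [NormedAddCommGroup E] [InnerProductSpace ℂ E]
    (T : E →L[ℂ] E) : 0 ≤ numRadius T := by
  apply Real.sSup_nonneg
  rintro r ⟨x, hx, rfl⟩
  positivity

lemma aux_numRadius_bdd {E : Type*} [NormedAddCommGroup E] [InnerProductSpace ℂ E]
    (T : E →L[ℂ] E) :
    BddAbove {r : ℝ | ∃ x : E, ‖x‖ = 1 ∧ r = ‖(inner ℂ (T x) x : ℂ)‖} := by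
  refine ⟨‖T‖, ?_⟩
  rintro r ⟨x, hx, rfl⟩
  calc ‖(inner ℂ (T x) x : ℂ)‖ ≤ ‖T x‖ * ‖x‖ := norm_inner_le_norm _ _
    _ ≤ ‖T‖ * ‖x‖ * ‖x‖ := by gcongr; exact T.le_opNorm x
    _ = ‖T‖ := by rw [hx]; ring

lemma aux_le_numRadius {E : Type*} [NormedAddCommGroup E] [InnerProductSpace ℂ E]
    (T : E →L[ℂ] E) (x : E) (hx : ‖x‖ = 1) :
    ‖(inner ℂ (T x) x : ℂ)‖ ≤ numRadius T :=
  le_csSup (aux_numRadius_bdd T) ⟨x, hx, rfl⟩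

lemma aux_re_le_norm (z : ℂ) : z.re ≤ ‖z‖ := by
  first
  | simpa [RCLike.re_eq_complex_re] using RCLike.re_le_norm z
  | simpa [Complex.norm_eq_abs] using Complex.re_le_abs z

lemma aux_inner_offDiag_le (B C : H →L[ℂ] H) (x₁ x₂ : H) (h1 : ‖x₁‖ = 1) (h2 : ‖x₂‖ = 1) :
    ‖(inner ℂ (B x₂) x₁ + inner ℂ (C x₁) x₂ : ℂ)‖ ≤ 2 * numRadius (offDiag B C) := by
  set s : ℂ := (((Real.sqrt 2)⁻¹ : ℝ) : ℂ) with hs_def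
  have hsqrt2 : (0:ℝ) < Real.sqrt 2 := Real.sqrt_pos.2 (by norm_num)
  have hs_norm : ‖s‖ = (Real.sqrt 2)⁻¹ := by
    rw [hs_def, Complex.norm_real, Real.norm_of_nonneg (by positivity : (0:ℝ) ≤ (Real.sqrt 2)⁻¹)]
  have hss : (starRingEnd ℂ) s * s = 1 / 2 := by
    rw [hs_def, Complex.conj_ofReal, ← Complex.ofReal_mul, ← mul_inv,
      Real.mul_self_sqrt (by norm_num : (0:ℝ) ≤ 2)]
    norm_num
  set v : WithLp 2 (H × H) := (WithLp.equiv 2 (H × H)).symm (s • x₁, s • x₂) with hv_def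
  have hv : ‖v‖ = 1 := by
    have hsq : ‖v‖ ^ 2 = 1 := by
      rw [hv_def, WithLp.prod_norm_sq_eq_of_L2]
      simp only [WithLp.equiv_symm_apply, WithLp.toLp_fst, WithLp.toLp_snd]
      rw [norm_smul, norm_smul, h1, h2, hs_norm]
      rw [show (Real.sqrt 2)⁻¹ * 1 = (Real.sqrt 2)⁻¹ by ring, inv_pow,
        Real.sq_sqrt (by norm_num : (0:ℝ) ≤ 2)]
      norm_num
    rw [← Real.sqrt_sq (norm_nonneg v), hsq, Real.sqrt_one]
  have hTv : offDiag B C v = (WithLp.equiv 2 (H × H)).symm (B (s • x₂), C (s • x₁)) := rfl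
  have hinner : (inner ℂ (offDiag B C v) v : ℂ)
      = (1 / 2) * (inner ℂ (B x₂) x₁ + inner ℂ (C x₁) x₂) := by
    rw [hTv, WithLp.prod_inner_apply]
    simp only [hv_def, WithLp.equiv_symm_apply, WithLp.toLp_fst, WithLp.toLp_snd, map_smul,
      inner_smul_left, inner_smul_right]
    linear_combination ((inner ℂ (B x₂) x₁ : ℂ) + (inner ℂ (C x₁) x₂ : ℂ)) * hss
  have key := aux_le_numRadius (offDiag B C) v hv
  rw [hinner, norm_mul] at key
  have hhalf : ‖(1 / 2 : ℂ)‖ = 1 / 2 := by norm_num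
  rw [hhalf] at key
  linarith

lemma aux_opNorm_le_of_unit (S : H →L[ℂ] H) (M : ℝ) (hM : 0 ≤ M)
    (h : ∀ u : H, ‖u‖ = 1 → ‖S u‖ ≤ M) : ‖S‖ ≤ M := by
  refine S.opNorm_le_bound hM fun y => ?_
  rcases eq_or_ne y 0 with rfl | hy
  · simp
  · have hn : (0:ℝ) < ‖y‖ := norm_pos_iff.2 hy
    have hu : ‖((‖y‖⁻¹ : ℝ) : ℂ) • y‖ = 1 := by
      rw [norm_smul, Complex.norm_real, Real.norm_of_nonneg (inv_nonneg.2 hn.le),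
        inv_mul_cancel₀ hn.ne']
    have h2 := h _ hu
    rw [map_smul, norm_smul, Complex.norm_real, Real.norm_of_nonneg (inv_nonneg.2 hn.le)] at h2
    calc ‖S y‖ = ‖y‖ * (‖y‖⁻¹ * ‖S y‖) := by field_simp
      _ ≤ ‖y‖ * M := by gcongr
      _ = M * ‖y‖ := by ring

lemma aux_norm_add_le (B C : H →L[ℂ] H) :
    ‖B + adjoint C‖ ≤ 2 * numRadius (offDiag B C) := by
  have hw : 0 ≤ numRadius (offDiag B C) := aux_numRadius_nonneg _
  refine aux_opNorm_le_of_unit _ _ (by linarith) fun u hu => ?_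
  set S : H →L[ℂ] H := B + adjoint C with hS_def
  by_cases hz : S u = 0
  · rw [hz, norm_zero]; linarith
  · have hn : (0:ℝ) < ‖S u‖ := norm_pos_iff.2 hz
    obtain ⟨x₁, hx_def⟩ : ∃ z : H, z = ((‖S u‖⁻¹ : ℝ) : ℂ) • S u := ⟨_, rfl⟩
    have hx₁ : ‖x₁‖ = 1 := by
      rw [hx_def, norm_smul, Complex.norm_real, Real.norm_of_nonneg (inv_nonneg.2 hn.le),
        inv_mul_cancel₀ hn.ne']
    have key := aux_inner_offDiag_le B C x₁ u hx₁ hu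
    have hSS : (inner ℂ (S u) (S u) : ℂ).re = ‖S u‖ ^ 2 := by
      have h := inner_self_eq_norm_sq (𝕜 := ℂ) (S u)
      simpa [RCLike.re_eq_complex_re] using h
    have hre : (inner ℂ (S u) x₁ : ℂ).re = ‖S u‖ := by
      rw [hx_def, inner_smul_right, Complex.re_ofReal_mul, hSS, sq, ← mul_assoc,
        inv_mul_cancel₀ hn.ne', one_mul]
    have hsplit : (inner ℂ (S u) x₁ : ℂ) = inner ℂ (B u) x₁ + inner ℂ ((adjoint C) u) x₁ := by
      rw [hS_def, ContinuousLinearMap.add_apply, inner_add_left]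
    have hCre : (inner ℂ (C x₁) u : ℂ).re = (inner ℂ ((adjoint C) u) x₁ : ℂ).re := by
      have h1 : (inner ℂ ((adjoint C) u) x₁ : ℂ)
          = (starRingEnd ℂ) (inner ℂ x₁ ((adjoint C) u) : ℂ) := (inner_conj_symm _ _).symm
      rw [h1, adjoint_inner_right, Complex.conj_re]
    have hre2 : (inner ℂ (B u) x₁ + inner ℂ (C x₁) u : ℂ).re = ‖S u‖ := by
      rw [hsplit] at hre
      simp only [Complex.add_re] at hre ⊢
      linarith
    calc ‖S u‖ = (inner ℂ (B u) x₁ + inner ℂ (C x₁) u : ℂ).re := hre2.symm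
      _ ≤ ‖(inner ℂ (B u) x₁ + inner ℂ (C x₁) u : ℂ)‖ := aux_re_le_norm _
      _ ≤ 2 * numRadius (offDiag B C) := key

lemma aux_norm_sub_le (B C : H →L[ℂ] H) :
    ‖B - adjoint C‖ ≤ 2 * numRadius (offDiag B C) := by
  have hw : 0 ≤ numRadius (offDiag B C) := aux_numRadius_nonneg _
  refine aux_opNorm_le_of_unit _ _ (by linarith) fun u hu => ?_
  set S : H →L[ℂ] H := B - adjoint C with hS_def
  by_cases hz : S u = 0
  · rw [hz, norm_zero]; linarith
  · have hn : (0:ℝ) < ‖S u‖ := norm_pos_iff.2 hz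
    obtain ⟨x₁, hx_def⟩ : ∃ z : H, z = ((‖S u‖⁻¹ : ℝ) : ℂ) • S u := ⟨_, rfl⟩
    have hx₁ : ‖x₁‖ = 1 := by
      rw [hx_def, norm_smul, Complex.norm_real, Real.norm_of_nonneg (inv_nonneg.2 hn.le),
        inv_mul_cancel₀ hn.ne']
    have hu' : ‖(Complex.I : ℂ) • u‖ = 1 := by
      rw [norm_smul, Complex.norm_I, one_mul, hu]
    have key := aux_inner_offDiag_le B C x₁ (Complex.I • u) hx₁ hu'
    have hCq : (inner ℂ (C x₁) u : ℂ)
        = (starRingEnd ℂ) (inner ℂ ((adjoint C) u) x₁ : ℂ) := by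
      rw [inner_conj_symm, adjoint_inner_right]
    have e1 : (inner ℂ (B (Complex.I • u)) x₁ : ℂ)
        = (starRingEnd ℂ) Complex.I * inner ℂ (B u) x₁ := by
      rw [map_smul, inner_smul_left]
    have e2 : (inner ℂ (C x₁) (Complex.I • u) : ℂ) = Complex.I * inner ℂ (C x₁) u :=
      inner_smul_right _ _ _
    have hzeq : (inner ℂ (B (Complex.I • u)) x₁ + inner ℂ (C x₁) (Complex.I • u) : ℂ)
        = -Complex.I * ((inner ℂ (B u) x₁ : ℂ)
            - (starRingEnd ℂ) (inner ℂ ((adjoint C) u) x₁ : ℂ)) := by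
      rw [e1, e2, hCq, Complex.conj_I]
      ring
    rw [hzeq, norm_mul, norm_neg, Complex.norm_I, one_mul] at key
    have hSS : (inner ℂ (S u) (S u) : ℂ).re = ‖S u‖ ^ 2 := by
      have h := inner_self_eq_norm_sq (𝕜 := ℂ) (S u)
      simpa [RCLike.re_eq_complex_re] using h
    have hre : (inner ℂ (S u) x₁ : ℂ).re = ‖S u‖ := by
      rw [hx_def, inner_smul_right, Complex.re_ofReal_mul, hSS, sq, ← mul_assoc,
        inv_mul_cancel₀ hn.ne', one_mul]
    have hsplit : (inner ℂ (S u) x₁ : ℂ) = inner ℂ (B u) x₁ - inner ℂ ((adjoint C) u) x₁ := by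
      rw [hS_def, ContinuousLinearMap.sub_apply, inner_sub_left]
    have hre2 : ((inner ℂ (B u) x₁ : ℂ)
        - (starRingEnd ℂ) (inner ℂ ((adjoint C) u) x₁ : ℂ)).re = ‖S u‖ := by
      rw [hsplit] at hre
      simp only [Complex.sub_re, Complex.conj_re] at hre ⊢
      linarith
    calc ‖S u‖ = ((inner ℂ (B u) x₁ : ℂ)
          - (starRingEnd ℂ) (inner ℂ ((adjoint C) u) x₁ : ℂ)).re := hre2.symm
      _ ≤ ‖(inner ℂ (B u) x₁ : ℂ) - (starRingEnd ℂ) (inner ℂ ((adjoint C) u) x₁ : ℂ)‖ :=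
          aux_re_le_norm _
      _ ≤ 2 * numRadius (offDiag B C) := key

set_option maxHeartbeats 1000000 in
set_option synthInstance.maxHeartbeats 400000 in
lemma aux_expand1 (B C : H →L[ℂ] H) :
    (adjoint B * B + C * adjoint C) + (adjoint B * B + C * adjoint C)
      = star (B + adjoint C) * (B + adjoint C)
        + star (B - adjoint C) * (B - adjoint C) := by
  simp only [← star_eq_adjoint, star_add, star_sub, star_star]
  noncomm_ring

set_option maxHeartbeats 1000000 in
set_option synthInstance.maxHeartbeats 400000 in
lemma aux_expand2 (B C : H →L[ℂ] H) :
    (B * adjoint B + adjoint C * C) + (B * adjoint B + adjoint C * C)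
      = (B + adjoint C) * star (B + adjoint C)
        + (B - adjoint C) * star (B - adjoint C) := by
  simp only [← star_eq_adjoint, star_add, star_sub, star_star]
  noncomm_ring

set_option maxHeartbeats 1000000 in
set_option synthInstance.maxHeartbeats 400000 in
lemma aux_norm1 (B C : H →L[ℂ] H) :
    ‖adjoint B * B + C * adjoint C‖
      ≤ (‖B + adjoint C‖ ^ 2 + ‖B - adjoint C‖ ^ 2) / 2 := by
  have h1 : ‖star (B + adjoint C) * (B + adjoint C)‖ = ‖B + adjoint C‖ ^ 2 := by
    rw [CStarRing.norm_star_mul_self, sq]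
  have h2 : ‖star (B - adjoint C) * (B - adjoint C)‖ = ‖B - adjoint C‖ ^ 2 := by
    rw [CStarRing.norm_star_mul_self, sq]
  have h3 := norm_add_le (star (B + adjoint C) * (B + adjoint C))
    (star (B - adjoint C) * (B - adjoint C))
  rw [← aux_expand1] at h3
  have h4 : ‖(adjoint B * B + C * adjoint C) + (adjoint B * B + C * adjoint C)‖
      = 2 * ‖adjoint B * B + C * adjoint C‖ := by
    rw [show (adjoint B * B + C * adjoint C) + (adjoint B * B + C * adjoint C)
      = (2:ℝ) • (adjoint B * B + C * adjoint C) by module, norm_smul]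
    simp
  rw [h4, h1, h2] at h3
  linarith

set_option maxHeartbeats 1000000 in
set_option synthInstance.maxHeartbeats 400000 in
lemma aux_norm2 (B C : H →L[ℂ] H) :
    ‖B * adjoint B + adjoint C * C‖
      ≤ (‖B + adjoint C‖ ^ 2 + ‖B - adjoint C‖ ^ 2) / 2 := by
  have h1 : ‖(B + adjoint C) * star (B + adjoint C)‖ = ‖B + adjoint C‖ ^ 2 := by
    rw [CStarRing.norm_self_mul_star, sq]
  have h2 : ‖(B - adjoint C) * star (B - adjoint C)‖ = ‖B - adjoint C‖ ^ 2 := by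
    rw [CStarRing.norm_self_mul_star, sq]
  have h3 := norm_add_le ((B + adjoint C) * star (B + adjoint C))
    ((B - adjoint C) * star (B - adjoint C))
  rw [← aux_expand2] at h3
  have h4 : ‖(B * adjoint B + adjoint C * C) + (B * adjoint B + adjoint C * C)‖
      = 2 * ‖B * adjoint B + adjoint C * C‖ := by
    rw [show (B * adjoint B + adjoint C * C) + (B * adjoint B + adjoint C * C)
      = (2:ℝ) • (B * adjoint B + adjoint C * C) by module, norm_smul]
    simp
  rw [h4, h1, h2] at h3
  linarith

set_option maxHeartbeats 1000000 in
theorem stmt_10 (B C : H →L[ℂ] H) :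
    (1 / (4 * Real.sqrt 2)) * Real.sqrt (‖B + adjoint C‖ ^ 4 + ‖B - adjoint C‖ ^ 4) ≤
      numRadius (offDiag B C) ^ 2 ∧
    (1 / 4) * max ‖opAbs B ^ 2 + opAbs (adjoint C) ^ 2‖ ‖opAbs (adjoint B) ^ 2 + opAbs C ^ 2‖ ≤
      (1 / (4 * Real.sqrt 2)) * Real.sqrt (‖B + adjoint C‖ ^ 4 + ‖B - adjoint C‖ ^ 4) := by
  set a : ℝ := ‖B + adjoint C‖ with ha_def
  set b : ℝ := ‖B - adjoint C‖ with hb_def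
  set w : ℝ := numRadius (offDiag B C) with hw_def
  have hw : 0 ≤ w := aux_numRadius_nonneg _
  have ha0 : 0 ≤ a := norm_nonneg _
  have hb0 : 0 ≤ b := norm_nonneg _
  have ha : a ≤ 2 * w := aux_norm_add_le B C
  have hb : b ≤ 2 * w := aux_norm_sub_le B C
  have hsqrt2 : (0:ℝ) < Real.sqrt 2 := Real.sqrt_pos.2 (by norm_num)
  have hsq2 : Real.sqrt 2 ^ 2 = 2 := Real.sq_sqrt (by norm_num)
  set t : ℝ := Real.sqrt (a ^ 4 + b ^ 4) with ht_def
  have ht0 : 0 ≤ t := Real.sqrt_nonneg _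
  constructor
  · -- first inequality
    have h1 : t ≤ Real.sqrt 2 * (4 * w ^ 2) := by
      have hmono : t ≤ Real.sqrt (2 * (2 * w) ^ 4) := by
        apply Real.sqrt_le_sqrt
        nlinarith [pow_le_pow_left₀ ha0 ha 4, pow_le_pow_left₀ hb0 hb 4]
      calc t ≤ Real.sqrt (2 * (2 * w) ^ 4) := hmono
        _ = Real.sqrt 2 * (4 * w ^ 2) := by
          rw [Real.sqrt_mul (by norm_num : (0:ℝ) ≤ 2), show (2 * w) ^ 4 = ((2 * w) ^ 2) ^ 2 by
            ring, Real.sqrt_sq (by positivity)]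
          ring
    calc (1 / (4 * Real.sqrt 2)) * t
        ≤ (1 / (4 * Real.sqrt 2)) * (Real.sqrt 2 * (4 * w ^ 2)) :=
          mul_le_mul_of_nonneg_left h1 (by positivity)
      _ = w ^ 2 := by
          field_simp
  · -- second inequality
    have e1 : opAbs B ^ 2 + opAbs (adjoint C) ^ 2 = adjoint B * B + C * adjoint C := by
      rw [aux_sq_opAbs, aux_sq_opAbs, adjoint_adjoint]
    have e2 : opAbs (adjoint B) ^ 2 + opAbs C ^ 2 = B * adjoint B + adjoint C * C := by
      rw [aux_sq_opAbs, aux_sq_opAbs, adjoint_adjoint]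
    rw [e1, e2]
    have hmax : max ‖adjoint B * B + C * adjoint C‖ ‖B * adjoint B + adjoint C * C‖
        ≤ (a ^ 2 + b ^ 2) / 2 := max_le (aux_norm1 B C) (aux_norm2 B C)
    have hkey : Real.sqrt 2 * ((a ^ 2 + b ^ 2) / 2) ≤ t := by
      rw [ht_def]
      apply Real.le_sqrt_of_sq_le
      nlinarith [sq_nonneg (a ^ 2 - b ^ 2), hsq2]
    calc (1 / 4) * max ‖adjoint B * B + C * adjoint C‖ ‖B * adjoint B + adjoint C * C‖
        ≤ (1 / 4) * ((a ^ 2 + b ^ 2) / 2) := mul_le_mul_of_nonneg_left hmax (by norm_num)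
      _ = (1 / (4 * Real.sqrt 2)) * (Real.sqrt 2 * ((a ^ 2 + b ^ 2) / 2)) := by
          field_simp
      _ ≤ (1 / (4 * Real.sqrt 2)) * t :=
          mul_le_mul_of_nonneg_left hkey (by positivity)
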